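/- Let G = (V, E) be a connected countable graph with degree bounded by μ, with combinatorial Laplacian Δ = C − A on ℓ²(V) (C the diagonal degree operator, A the adjacency operator), and probabilistic Laplacian Δ_c = I − P where P = C^{-1}A. Let τ be a finite trace on a C*-algebra of operators on ℓ²(V) containing Δ. Then for all t ≥ 0: τ((1 + μtΔ_c)^{-1}) ≤ τ((1 + tΔ)^{-1}) ≤ τ((1 + tΔ_c)^{-1}), where Δ_c is identified with a (non-self-adjoint on ℓ²(V), but similar to self-adjoint) operator in the algebra via τ(Δ_c^n) = τ(Q^n) with Q = C^{-1/2}ΔC^{-1/2}. -/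

import Mathlib

section Helpers

variable {A : Type*} [CStarAlgebra A] [PartialOrder A] [StarOrderedRing A]

lemma aux_smul_nonneg {t : ℝ} (ht : 0 ≤ t) {x : A} (hx : 0 ≤ x) :
    0 ≤ (t : ℂ) • x := by
  obtain ⟨s, hs0, hss⟩ : ∃ s : A, 0 ≤ s ∧ s * s = x :=
    ⟨CFC.sqrt x, CFC.sqrt_nonneg x, CFC.sqrt_mul_sqrt_self x hx⟩
  have hsa : star s = s := IsSelfAdjoint.of_nonneg hs0
  have key : (t : ℂ) • x
      = star (((Real.sqrt t : ℝ) : ℂ) • s) * (((Real.sqrt t : ℝ) : ℂ) • s) := by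
    rw [star_smul, hsa, smul_mul_smul_comm, hss]
    congr 1
    rw [Complex.star_def, Complex.conj_ofReal, ← Complex.ofReal_mul,
      Real.mul_self_sqrt ht]
  rw [key]
  exact star_mul_self_nonneg _

lemma aux_isUnit_one_add {x : A} (hx : 0 ≤ x) : IsUnit (1 + x) :=
  CStarAlgebra.isUnit_of_le 1 (le_add_of_nonneg_right hx) isStrictlyPositive_one

lemma aux_inverse_antitone {a b : A} (ha0 : 0 ≤ a) (hab : a ≤ b) (hau : IsUnit a) :
    Ring.inverse b ≤ Ring.inverse a := by
  have hbu : IsUnit b := CStarAlgebra.isUnit_of_le a hab (IsStrictlyPositive.iff_of_unital.mpr ⟨ha0, hau⟩)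
  lift a to Aˣ using hau
  lift b to Aˣ using hbu
  rw [Ring.inverse_unit, Ring.inverse_unit]
  exact CStarAlgebra.inv_le_inv ha0 hab

omit [PartialOrder A] [StarOrderedRing A] in
lemma aux_inverse_conj {r rinv y : A} (h1 : r * rinv = 1) (h2 : rinv * r = 1)
    (hy : IsUnit y) :
    Ring.inverse (r * y * rinv) = r * Ring.inverse y * rinv := by
  lift y to Aˣ using hy
  have p1 : (r * ↑y * rinv) * (r * ↑y⁻¹ * rinv) = 1 := by
    have e : (r * ↑y * rinv) * (r * ↑y⁻¹ * rinv)
        = r * (↑y * ((rinv * r) * ↑y⁻¹)) * rinv := by noncomm_ring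
    rw [e, h2, one_mul, Units.mul_inv, mul_one, h1]
  have p2 : (r * ↑y⁻¹ * rinv) * (r * ↑y * rinv) = 1 := by
    have e : (r * ↑y⁻¹ * rinv) * (r * ↑y * rinv)
        = r * (↑y⁻¹ * ((rinv * r) * ↑y)) * rinv := by noncomm_ring
    rw [e, h2, one_mul, Units.inv_mul, mul_one, h1]
  let w : Aˣ := ⟨r * ↑y * rinv, r * ↑y⁻¹ * rinv, p1, p2⟩
  rw [show r * ↑y * rinv = (w : A) from rfl, Ring.inverse_unit, Ring.inverse_unit]
  rfl

end Helpers

section TraceHelpers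

variable {A : Type*} [Ring A] [Algebra ℂ A] (τ : A →ₗ[ℂ] ℂ)
    (hτtr : ∀ a b : A, τ (a * b) = τ (b * a))

include hτtr in
lemma aux_trace_conj {r rinv : A} (h2 : rinv * r = 1) (x : A) :
    τ (r * x * rinv) = τ x := by
  rw [hτtr, ← mul_assoc, h2, one_mul]

include hτtr in
lemma aux_trace_inverse_comm {a b : A} (hu : IsUnit (1 + b * a)) :
    τ (Ring.inverse (1 + a * b)) = τ (Ring.inverse (1 + b * a)) := by
  obtain ⟨u, hu'⟩ := hu
  have hba : b * a = (u : A) - 1 := by rw [hu']; abel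
  have p1 : (1 + a * b) * (1 - a * ↑u⁻¹ * b) = 1 := by
    have e : (1 + a * b) * (1 - a * ↑u⁻¹ * b)
        = 1 + a * b - a * (((1 + b * a) * ↑u⁻¹)) * b := by noncomm_ring
    rw [e, ← hu', Units.mul_inv]
    noncomm_ring
  have p2 : (1 - a * ↑u⁻¹ * b) * (1 + a * b) = 1 := by
    have e : (1 - a * ↑u⁻¹ * b) * (1 + a * b)
        = 1 + a * b - a * ((↑u⁻¹ * (1 + b * a))) * b := by noncomm_ring
    rw [e, ← hu', Units.inv_mul]
    noncomm_ring
  let w : Aˣ := ⟨1 + a * b, 1 - a * ↑u⁻¹ * b, p1, p2⟩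
  rw [show (1 + a * b) = (w : A) from rfl, Ring.inverse_unit,
    show (1 + b * a) = (u : A) from hu'.symm, Ring.inverse_unit]
  have e2 : τ (a * ↑u⁻¹ * b) = τ (1 : A) - τ ((↑u⁻¹ : A)) := by
    rw [hτtr, ← mul_assoc, hba, sub_mul, one_mul, map_sub, Units.mul_inv]
  have e3 : ((w⁻¹ : Aˣ) : A) = 1 - a * ↑u⁻¹ * b := rfl
  rw [e3, map_sub, e2]
  ring

end TraceHelpers

/-- Trace comparison between the combinatorial Laplacian `Δ = C - A` and the probabilistic
Laplacian `Δ_c = 1 - P` (with `A = C P`, `1 ≤ C ≤ μ·1`) of a bounded-degree graph: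
for a finite trace `τ` on a C*-algebra of operators containing `Δ`, and identifying
`Δ_c` via `τ(Δ_c^n) = τ(Q^n)` with `Q = C^{-1/2} Δ C^{-1/2}`, one has
`τ((1+μtΔ_c)⁻¹) ≤ τ((1+tΔ)⁻¹) ≤ τ((1+tΔ_c)⁻¹)` for all `t ≥ 0`. -/
theorem stmt9 {A : Type*} [NormedRing A] [StarRing A] [CStarRing A] [CompleteSpace A]
    [NormedAlgebra ℂ A] [StarModule ℂ A] [PartialOrder A] [StarOrderedRing A]
    (τ : A →ₗ[ℂ] ℂ)
    (hτpos : ∀ a : A, 0 ≤ a → 0 ≤ (τ a).re ∧ (τ a).im = 0)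
    (hτtr : ∀ a b : A, τ (a * b) = τ (b * a))
    (hτbdd : ∃ Cτ : ℝ, ∀ a : A, ‖τ a‖ ≤ Cτ * ‖a‖)
    (μ : ℝ) (hμ : 1 ≤ μ)
    (C Adj Δ P Δc R : A)
    (hC1 : 1 ≤ C) (hCμ : C ≤ μ • (1 : A))
    (hΔ : Δ = C - Adj) (hΔpos : 0 ≤ Δ)
    (hP : Adj = C * P) (hΔc : Δc = 1 - P)
    -- `R = C^{-1/2}`:
    (hR : 0 ≤ R) (hRC : R * R * C = 1) (hCR : C * R * R = 1)
    -- identification of `Δ_c` with `Q = C^{-1/2} Δ C^{-1/2}` at the level of the trace: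
    (htr : ∀ n : ℕ, τ (Δc ^ n) = τ ((R * Δ * R) ^ n)) :
    ∀ t : ℝ, 0 ≤ t →
      (τ (Ring.inverse (1 + ((μ * t : ℝ) : ℂ) • Δc))).re ≤
        (τ (Ring.inverse (1 + (t : ℂ) • Δ))).re ∧
      (τ (Ring.inverse (1 + (t : ℂ) • Δ))).re ≤
        (τ (Ring.inverse (1 + (t : ℂ) • Δc))).re := by
  letI : CStarAlgebra A := {}
  intro t ht
  -- trace monotonicity
  have hmono : ∀ a b : A, a ≤ b → (τ a).re ≤ (τ b).re := by
    intro a b hab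
    have h := (hτpos (b - a) (sub_nonneg.mpr hab)).1
    rw [map_sub, Complex.sub_re] at h
    linarith
  -- basic facts about R and Q := R * Δ * R
  have hRsa : star R = R := IsSelfAdjoint.of_nonneg hR
  have hQ0 : 0 ≤ R * Δ * R := by
    have h := star_left_conjugate_nonneg hΔpos R
    rwa [hRsa] at h
  have hComm : C * R = R * C := by
    calc C * R = (C * R) * (R * R * C) := by rw [hRC, mul_one]
    _ = (C * R * R) * (R * C) := by noncomm_ring
    _ = R * C := by rw [hCR, one_mul]
  have hRRinv : R * (R * C) = 1 := by rw [← mul_assoc]; exact hRC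
  have hRinvR : (R * C) * R = 1 := by
    rw [mul_assoc, hComm, ← mul_assoc]; exact hRC
  have hΔcRR : Δc = R * R * Δ := by
    have e : R * R * (C - C * P) = R * R * C - (R * R * C) * P := by noncomm_ring
    rw [hΔc, hΔ, hP, e, hRC, one_mul]
  -- conjugation identity for Δc
  have hconjQ : ∀ z : ℂ, R * (1 + z • (R * Δ * R)) * (R * C) = 1 + z • Δc := by
    intro z
    have e1 : R * (1 + z • (R * Δ * R)) * (R * C)
        = R * (R * C) + z • (R * (R * Δ * R) * (R * C)) := by
      rw [mul_add, mul_one, add_mul, mul_smul_comm, smul_mul_assoc]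
    have e2 : R * (R * Δ * R) * (R * C) = (R * R) * Δ * (R * R * C) := by
      noncomm_ring
    rw [e1, hRRinv, e2, hRC, mul_one, ← hΔcRR]
  have hQtrace : ∀ s : ℝ, 0 ≤ s →
      τ (Ring.inverse (1 + (s : ℂ) • Δc))
        = τ (Ring.inverse (1 + (s : ℂ) • (R * Δ * R))) := by
    intro s hs
    have hu : IsUnit (1 + (s : ℂ) • (R * Δ * R)) :=
      aux_isUnit_one_add (aux_smul_nonneg hs hQ0)
    rw [← hconjQ (s : ℂ), aux_inverse_conj hRRinv hRinvR hu,
      aux_trace_conj τ hτtr hRinvR]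
  -- the square root s of Q and X := s * C * s
  set s : A := CFC.sqrt (R * Δ * R) with hsdef
  have hs0 : 0 ≤ s := CFC.sqrt_nonneg _
  have hssa : star s = s := IsSelfAdjoint.of_nonneg hs0
  have hss : s * s = R * Δ * R := CFC.sqrt_mul_sqrt_self _ hQ0
  have hC0 : (0 : A) ≤ C := zero_le_one.trans hC1
  have hX0 : 0 ≤ s * C * s := by
    have h := star_left_conjugate_nonneg hC0 s
    rwa [hssa] at h
  have hQX : R * Δ * R ≤ s * C * s := by
    have h := star_left_conjugate_le_conjugate hC1 s
    rwa [hssa, mul_one, hss] at h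
  have hXμ : s * C * s ≤ μ • (R * Δ * R) := by
    have h := star_left_conjugate_le_conjugate hCμ s
    rwa [hssa, mul_smul_comm, mul_one, smul_mul_assoc, hss] at h
  -- units
  have hu_tQ : IsUnit (1 + (t : ℂ) • (R * Δ * R)) :=
    aux_isUnit_one_add (aux_smul_nonneg ht hQ0)
  have hu_tX : IsUnit (1 + (t : ℂ) • (s * C * s)) :=
    aux_isUnit_one_add (aux_smul_nonneg ht hX0)
  have hu_tΔ : IsUnit (1 + (t : ℂ) • Δ) :=
    aux_isUnit_one_add (aux_smul_nonneg ht hΔpos)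
  -- conjugation identity relating Δ and (R*Δ*R)*C
  have hconjΔ : R * (1 + (t : ℂ) • Δ) * (R * C) = 1 + (t : ℂ) • ((R * Δ * R) * C) := by
    have e1 : R * (1 + (t : ℂ) • Δ) * (R * C)
        = R * (R * C) + (t : ℂ) • (R * Δ * (R * C)) := by
      rw [mul_add, mul_one, add_mul, mul_smul_comm, smul_mul_assoc]
    rw [e1, hRRinv, ← mul_assoc (R * Δ) R C]
  have hu_ba : IsUnit (1 + (t : ℂ) • ((R * Δ * R) * C)) := by
    rw [← hconjΔ]
    exact ((⟨R, R * C, hRRinv, hRinvR⟩ : Aˣ).isUnit.mul hu_tΔ).mul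
      (⟨R * C, R, hRinvR, hRRinv⟩ : Aˣ).isUnit
  -- τ((1+tX)⁻¹) = τ((1+tΔ)⁻¹)
  have e_ab : ((t : ℂ) • (s * C)) * s = (t : ℂ) • (s * C * s) := smul_mul_assoc _ _ _
  have e_ba : s * ((t : ℂ) • (s * C)) = (t : ℂ) • ((R * Δ * R) * C) := by
    rw [mul_smul_comm, ← mul_assoc, hss]
  have hu_ba' : IsUnit (1 + s * ((t : ℂ) • (s * C))) := by rw [e_ba]; exact hu_ba
  have eqX : τ (Ring.inverse (1 + (t : ℂ) • (s * C * s)))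
      = τ (Ring.inverse (1 + (t : ℂ) • Δ)) := by
    calc τ (Ring.inverse (1 + (t : ℂ) • (s * C * s)))
        = τ (Ring.inverse (1 + ((t : ℂ) • (s * C)) * s)) := by rw [e_ab]
      _ = τ (Ring.inverse (1 + s * ((t : ℂ) • (s * C)))) :=
          aux_trace_inverse_comm τ hτtr hu_ba'
      _ = τ (Ring.inverse (1 + (t : ℂ) • ((R * Δ * R) * C))) := by rw [e_ba]
      _ = τ (Ring.inverse (R * (1 + (t : ℂ) • Δ) * (R * C))) := by rw [hconjΔ]
      _ = τ (Ring.inverse (1 + (t : ℂ) • Δ)) := by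
          rw [aux_inverse_conj hRRinv hRinvR hu_tΔ, aux_trace_conj τ hτtr hRinvR]
  -- scalar rewriting
  have hμQ : ((μ * t : ℝ) : ℂ) • (R * Δ * R) = (t : ℂ) • (μ • (R * Δ * R)) := by
    rw [← Complex.coe_smul, smul_smul, ← Complex.ofReal_mul, mul_comm t μ]
  -- order facts
  have hsm1 : (t : ℂ) • (R * Δ * R) ≤ (t : ℂ) • (s * C * s) := by
    rw [← sub_nonneg, ← smul_sub]
    exact aux_smul_nonneg ht (sub_nonneg.mpr hQX)
  have hsm2 : (t : ℂ) • (s * C * s) ≤ ((μ * t : ℝ) : ℂ) • (R * Δ * R) := by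
    rw [hμQ, ← sub_nonneg, ← smul_sub]
    exact aux_smul_nonneg ht (sub_nonneg.mpr hXμ)
  constructor
  · -- lower bound
    have hμt : (0 : ℝ) ≤ μ * t := mul_nonneg (zero_le_one.trans hμ) ht
    have h1 : Ring.inverse (1 + ((μ * t : ℝ) : ℂ) • (R * Δ * R))
        ≤ Ring.inverse (1 + (t : ℂ) • (s * C * s)) :=
      aux_inverse_antitone (add_nonneg zero_le_one (aux_smul_nonneg ht hX0))
        (add_le_add_right hsm2 1) hu_tX
    calc (τ (Ring.inverse (1 + ((μ * t : ℝ) : ℂ) • Δc))).re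
        = (τ (Ring.inverse (1 + ((μ * t : ℝ) : ℂ) • (R * Δ * R)))).re := by
          rw [hQtrace _ hμt]
      _ ≤ (τ (Ring.inverse (1 + (t : ℂ) • (s * C * s)))).re := hmono _ _ h1
      _ = (τ (Ring.inverse (1 + (t : ℂ) • Δ))).re := by rw [eqX]
  · -- upper bound
    have h1 : Ring.inverse (1 + (t : ℂ) • (s * C * s))
        ≤ Ring.inverse (1 + (t : ℂ) • (R * Δ * R)) :=
      aux_inverse_antitone (add_nonneg zero_le_one (aux_smul_nonneg ht hQ0))
        (add_le_add_right hsm1 1) hu_tQ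
    calc (τ (Ring.inverse (1 + (t : ℂ) • Δ))).re
        = (τ (Ring.inverse (1 + (t : ℂ) • (s * C * s)))).re := by rw [eqX]
      _ ≤ (τ (Ring.inverse (1 + (t : ℂ) • (R * Δ * R)))).re := hmono _ _ h1
      _ = (τ (Ring.inverse (1 + (t : ℂ) • Δc))).re := by rw [← hQtrace _ ht]
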